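/- Let A be an n×n Hermitian matrix with A𝟙ₙ = 0 and let Â be the cone matrix [[0, 𝟙ₙᵀ],[𝟙ₙ, A]]. Then the quantum walk started at the conical vertex satisfies exp(-iÂt)·e₀ = (cos(√n·t), -(i/√n)·sin(√n·t)·𝟙ₙ)ᵀ for all real t. -/

import Mathlib

open Matrix

/-- The cone `K₁ + X`: border a Hermitian matrix `A` with a new vertex joined
to all vertices with weight 1. -/
noncomputable def cone {n : ℕ} (A : Matrix (Fin n) (Fin n) ℂ) :
    Matrix (Fin (n + 1)) (Fin (n + 1)) ℂ :=
  Matrix.of fun i j =>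
    Fin.cases (Fin.cases 0 (fun _ => 1) j)
      (fun i' => Fin.cases 1 (fun j' => A i' j') j) i

section aux
variable {n : ℕ} (A : Matrix (Fin n) (Fin n) ℂ)

lemma cone_mulVec_e0 : cone A *ᵥ Pi.single 0 1 = Fin.cons 0 (fun _ => 1) := by
  rw [mulVec_single]
  funext i
  refine Fin.cases ?_ (fun i' => ?_) i <;> simp [cone]

lemma cone_mulVec_u (h1 : A *ᵥ (fun _ => (1 : ℂ)) = 0) :
    cone A *ᵥ (Fin.cons 0 (fun _ => 1) : Fin (n+1) → ℂ)
      = (n : ℂ) • (Pi.single 0 1 : Fin (n+1) → ℂ) := by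
  funext i
  have h1' := congrFun h1
  refine Fin.cases ?_ (fun i' => ?_) i <;>
    simp [mulVec, dotProduct, Fin.sum_univ_succ, cone, Pi.single_apply]
  · simpa [mulVec, dotProduct] using h1' i'

lemma cone_pow_mulVec (h1 : A *ᵥ (fun _ => (1 : ℂ)) = 0) (k : ℕ) :
    (cone A) ^ (2*k) *ᵥ (Pi.single 0 1 : Fin (n+1) → ℂ)
        = ((n:ℂ)^k) • (Pi.single 0 1 : Fin (n+1) → ℂ) ∧
    (cone A) ^ (2*k+1) *ᵥ (Pi.single 0 1 : Fin (n+1) → ℂ)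
        = ((n:ℂ)^k) • (Fin.cons 0 (fun _ => 1) : Fin (n+1) → ℂ) := by
  induction k with
  | zero =>
    constructor
    · rw [Nat.mul_zero, pow_zero, one_mulVec, pow_zero, one_smul]
    · rw [Nat.mul_zero, pow_zero, Nat.zero_add, pow_one, one_smul]
      exact cone_mulVec_e0 A
  | succ k ih =>
    have h2 : 2*(k+1) = (2*k+1) + 1 := by ring
    have h3 : 2*(k+1)+1 = (2*(k+1)) + 1 := rfl
    constructor
    · rw [h2, pow_succ', ← mulVec_mulVec, ih.2, mulVec_smul, cone_mulVec_u A h1,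
        smul_smul, pow_succ]
    · have he : (cone A) ^ (2*(k+1)) *ᵥ (Pi.single 0 1 : Fin (n+1) → ℂ)
          = ((n:ℂ)^(k+1)) • (Pi.single 0 1 : Fin (n+1) → ℂ) := by
        rw [h2, pow_succ', ← mulVec_mulVec, ih.2, mulVec_smul, cone_mulVec_u A h1,
          smul_smul, pow_succ]
      rw [h3, pow_succ', ← mulVec_mulVec, he, mulVec_smul, cone_mulVec_e0 A]

end aux

/-- the quantum walk on the cone started at the conical vertex satisfies
`exp(-iÂt)·e₀ = (cos(√n·t), -(i/√n)·sin(√n·t)·𝟙)ᵀ` for all real `t`. -/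
theorem stmt1 {n : ℕ} (A : Matrix (Fin n) (Fin n) ℂ)
    (hA : A.IsHermitian)
    (h1 : A *ᵥ (fun _ => (1 : ℂ)) = 0) (t : ℝ) :
    NormedSpace.exp ((-(Complex.I * (t : ℂ))) • cone A) *ᵥ Pi.single 0 1
      = (Fin.cons ((Real.cos (Real.sqrt n * t) : ℝ) : ℂ)
          (fun _ => -(Complex.I / ((Real.sqrt n : ℝ) : ℂ)) *
            ((Real.sin (Real.sqrt n * t) : ℝ) : ℂ)) : Fin (n + 1) → ℂ) := by
    classical
  set c : ℂ := -(Complex.I * (t : ℂ)) with hc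
  set M : Matrix (Fin (n+1)) (Fin (n+1)) ℂ := c • cone A with hM
  set e0 : Fin (n+1) → ℂ := Pi.single 0 1 with he0
  set u : Fin (n+1) → ℂ := Fin.cons 0 (fun _ => 1) with hu
  set s : ℂ := ((Real.sqrt n : ℝ) : ℂ) with hsdef
  set x : ℂ := ((Real.sqrt n * t : ℝ) : ℂ) with hxdef
  have hs2 : s ^ 2 = (n : ℂ) := by
    rw [hsdef, ← Complex.ofReal_pow, Real.sq_sqrt (by positivity)]
    norm_cast
  have hx : x = s * (t : ℂ) := by
    rw [hxdef, hsdef, Complex.ofReal_mul]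
  have hc2 : c ^ 2 = -((t : ℂ) ^ 2) := by
    calc c ^ 2 = Complex.I ^ 2 * (t:ℂ) ^ 2 := by rw [hc]; ring
    _ = -((t:ℂ)^2) := by rw [Complex.I_sq]; ring
  have hsum : Summable (fun k : ℕ => (Nat.factorial k : ℂ)⁻¹ • M ^ k) := by
    letI : SeminormedRing (Matrix (Fin (n+1)) (Fin (n+1)) ℂ) := Matrix.linftyOpSemiNormedRing
    letI : NormedRing (Matrix (Fin (n+1)) (Fin (n+1)) ℂ) := Matrix.linftyOpNormedRing
    letI : NormedAlgebra ℂ (Matrix (Fin (n+1)) (Fin (n+1)) ℂ) := Matrix.linftyOpNormedAlgebra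
    exact NormedSpace.expSeries_summable' M
  let L : Matrix (Fin (n+1)) (Fin (n+1)) ℂ →L[ℂ] (Fin (n+1) → ℂ) :=
    { toFun := fun N => N *ᵥ e0
      map_add' := fun N₁ N₂ => add_mulVec N₁ N₂ e0
      map_smul' := fun a N => smul_mulVec a N e0
      cont := continuous_id.matrix_mulVec continuous_const }
  set g : ℕ → (Fin (n+1) → ℂ) := fun k => (Nat.factorial k : ℂ)⁻¹ • (M ^ k *ᵥ e0) with hg
  have hLg : NormedSpace.exp M *ᵥ e0 = ∑' k, g k := by
    calc NormedSpace.exp M *ᵥ e0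
        = L (∑' k : ℕ, (Nat.factorial k : ℂ)⁻¹ • M ^ k) := by
          rw [NormedSpace.exp_eq_tsum ℂ]
          rfl
      _ = ∑' k : ℕ, L ((Nat.factorial k : ℂ)⁻¹ • M ^ k) := L.map_tsum hsum
      _ = ∑' k, g k := tsum_congr fun k => by rw [L.map_smul]; rfl
  have heform : ∀ k, g (2*k) = ((-1:ℂ)^k * x^(2*k) / (Nat.factorial (2*k) : ℂ)) • e0 := by
    intro k
    have hp := (cone_pow_mulVec A h1 k).1
    rw [hg]
    simp only [hM, he0, smul_pow, smul_mulVec, hp, smul_smul]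
    congr 1
    rw [pow_mul, hc2, pow_mul, hx, mul_pow, ← hs2]
    rw [neg_pow]
    field_simp
    ring
  have hoform : ∀ k, g (2*k+1) = ((Nat.factorial (2*k+1) : ℂ)⁻¹ * c^(2*k+1) * (n:ℂ)^k) • u := by
    intro k
    have hp := (cone_pow_mulVec A h1 k).2
    rw [hg]
    simp only [hM, he0, smul_pow, smul_mulVec, hp, smul_smul]
    rw [← hu, mul_assoc]
  have heven : HasSum (fun k => g (2*k)) (Complex.cos x • e0) := by
    have := (Complex.hasSum_cos x).smul_const e0
    simpa only [heform] using this
  have hodd : HasSum (fun k => g (2*k+1)) ((-(Complex.I / s) * Complex.sin x) • u) := by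
    rcases Nat.eq_zero_or_pos n with h0 | hn
    · have hu0 : u = 0 := by
        subst h0
        funext i
        refine Fin.cases ?_ (fun i' => i'.elim0) i
        simp [hu]
      have hz : ∀ k, g (2*k+1) = 0 := fun k => by rw [hoform k, hu0, smul_zero]
      rw [funext hz, hu0, smul_zero]
      exact hasSum_zero
    · have hs0 : s ≠ 0 := by
        rw [hsdef]
        simp only [ne_eq, Complex.ofReal_eq_zero]
        positivity
      have hsum2 := ((Complex.hasSum_sin x).mul_left (-(Complex.I / s))).smul_const u
      have hfun : (fun k => g (2*k+1))
          = fun k => (-(Complex.I/s) * ((-1:ℂ)^k * x^(2*k+1) / (Nat.factorial (2*k+1) : ℂ))) • u := by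
        funext k
        rw [hoform k]
        congr 1
        have hss : Complex.I / s * s = Complex.I := div_mul_cancel₀ _ hs0
        have hcp : c ^ (2*k+1) = (-((t:ℂ)^2))^k * c := by rw [pow_succ, pow_mul, hc2]
        rw [hcp, hc, hx, show ((n:ℂ))^k = (s^2)^k from by rw [hs2]]
        linear_combination ((-1:ℂ)^k * (t:ℂ)^(2*k+1) * s^(2*k)
          / (Nat.factorial (2*k+1) : ℂ)) * hss
      rw [hfun]
      exact hsum2
  have htot : HasSum g (Complex.cos x • e0 + (-(Complex.I / s) * Complex.sin x) • u) :=
    heven.even_add_odd hodd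
  rw [hLg, htot.tsum_eq]
  funext i
  refine Fin.cases ?_ (fun i' => ?_) i
  · simp only [Pi.add_apply, Pi.smul_apply, he0, hu, Fin.cons_zero, Pi.single_eq_same,
      smul_eq_mul, mul_one, mul_zero, add_zero]
    rw [hxdef, Complex.ofReal_mul, Complex.ofReal_cos, Complex.ofReal_mul]
  · simp only [Pi.add_apply, Pi.smul_apply, he0, hu, Fin.cons_succ, smul_eq_mul, mul_one,
      Pi.single_apply, Fin.succ_ne_zero, if_false, mul_zero, zero_add]
    rw [hxdef, hsdef, Complex.ofReal_mul, Complex.ofReal_sin, Complex.ofReal_mul]
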